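/- arXiv:1102.2195 — 3 statements merged into one kernel-verified Lean document; each statement's English description precedes it below -/
import Mathlib

section
/- Let p be an element of a join-semilattice L. If A is a tight join-cover of p all of whose elements are join-irreducible, then A is a minimal join-cover of p. -/
/-- A finite set `E` covers `p` if `p ≤ ⋁E`. -/
def Covers {α : Type*} [SemilatticeSup α] (p : α) (E : Finset α) : Prop :=
  ∃ h : E.Nonempty, p ≤ E.sup' h id

/-- `X` refines `E`: every element of `X` lies below some element of `E`. -/
def Refines {α : Type*} [SemilatticeSup α] (X E : Finset α) : Prop :=
  ∀ x ∈ X, ∃ e ∈ E, x ≤ e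

/-- `E` covers `p` tightly: `E` covers `p`, no element of `E` is a least element
of the semilattice, and `p ≰ x ⊔ ⋁(E \ {u})` whenever `u ∈ E` and `x < u`
(the join `x ⊔ ⋁(E \ {u})` being computed as `⋁({x} ∪ (E \ {u}))`). -/
def TightCovers {α : Type*} [SemilatticeSup α] [DecidableEq α]
    (p : α) (E : Finset α) : Prop :=
  Covers p E ∧ (∀ u ∈ E, ¬ IsBot u) ∧
    ∀ u ∈ E, ∀ x, x < u →
      ¬ p ≤ (insert x (E.erase u)).sup' (Finset.insert_nonempty x _) id

/-- `E` joins to `a` tightly: `E` covers `a` tightly and `⋁E = a`. -/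
def TightJoins {α : Type*} [SemilatticeSup α] [DecidableEq α]
    (a : α) (E : Finset α) : Prop :=
  TightCovers a E ∧ ∃ h : E.Nonempty, E.sup' h id = a

/-- `E` covers `p` minimally. -/
def MinCovers {α : Type*} [SemilatticeSup α] (p : α) (E : Finset α) : Prop :=
  Covers p E ∧ ∀ X : Finset α, Covers p X → Refines X E → E ⊆ X

lemma supIrred_mem_of_sup' {α : Type*} [SemilatticeSup α] {a : α} {s : Finset α}
    (hs : s.Nonempty) (ha : SupIrred a) (h : s.sup' hs id = a) : a ∈ s := by
  induction hs using Finset.Nonempty.cons_induction with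
  | singleton b => simpa using h.symm
  | cons b s hb hs ih =>
      rw [Finset.sup'_cons (H := hs)] at h
      rcases ha.2 h with h' | h'
      · simp [← h']
      · exact Finset.mem_cons_of_mem (ih h')

/-- A tight join-cover all of whose elements are join-irreducible is a minimal
join-cover. -/
theorem stmt9 {α : Type*} [SemilatticeSup α] [DecidableEq α] (p : α)
    (A : Finset α) (hA : TightCovers p A) (hirr : ∀ q ∈ A, SupIrred q) :
    MinCovers p A := by
  obtain ⟨hcov, _hbot, htight⟩ := hA
  refine ⟨hcov, fun X hX href u hu => ?_⟩
  by_contra huX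
  obtain ⟨hXne, hXle⟩ := hX
  classical
  set Y := X.filter (fun x => x ≤ u) with hYdef
  have hout : ∀ x ∈ X, x ∉ Y → ∃ e ∈ A.erase u, x ≤ e := by
    intro x hx hxY
    have hxu : ¬ x ≤ u := fun h => hxY (Finset.mem_filter.2 ⟨hx, h⟩)
    obtain ⟨e, he, hxe⟩ := href x hx
    refine ⟨e, Finset.mem_erase.2 ⟨?_, he⟩, hxe⟩
    rintro rfl; exact hxu hxe
  by_cases hYne : Y.Nonempty
  · have hsu : Y.sup' hYne id ≤ u :=
      Finset.sup'_le _ _ fun y hy => (Finset.mem_filter.1 hy).2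
    rcases lt_or_eq_of_le hsu with hlt | heq
    · apply htight u hu _ hlt
      refine hXle.trans (Finset.sup'_le _ _ fun x hx => ?_)
      by_cases hxY : x ∈ Y
      · exact (Finset.le_sup' id hxY).trans
          (Finset.le_sup' id (Finset.mem_insert_self _ _))
      · obtain ⟨e, he, hxe⟩ := hout x hx hxY
        exact hxe.trans (Finset.le_sup' id (Finset.mem_insert_of_mem he))
    · have : u ∈ Y := supIrred_mem_of_sup' hYne (hirr u hu) heq
      exact huX (Finset.mem_filter.1 this).1
  · obtain ⟨b, hb⟩ := not_isMin_iff.1 (hirr u hu).1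
    apply htight u hu b hb
    refine hXle.trans (Finset.sup'_le _ _ fun x hx => ?_)
    obtain ⟨e, he, hxe⟩ := hout x hx (fun h => hYne ⟨x, h⟩)
    exact hxe.trans (Finset.le_sup' id (Finset.mem_insert_of_mem he))
end

section
/- Let L be a modular lattice, let p, p̄, a ∈ L with p and p̄ join-irreducible, let Q be a minimal join-cover of a with p̄ ∉ Q, suppose p ≤ p̄ ∨ a is a tight join-cover and that {p̄} ∪ Q covers p irredundantly. Then {p̄} ∪ Q is a minimal join-cover of p. -/
/-- `E` covers `p` irredundantly: `E` covers `p` but no proper subset obtained by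
removing one element does. -/
def IrredCovers {α : Type*} [SemilatticeSup α] [DecidableEq α]
    (p : α) (E : Finset α) : Prop :=
  Covers p E ∧ ∀ u ∈ E, ¬ Covers p (E.erase u)

section Aux

variable {α : Type*} [Lattice α] [IsModularLattice α]

/-- Modular law in `WithBot α`. -/
private lemma modW {x y z : WithBot α} (h : x ≤ z) : (x ⊔ y) ⊓ z = x ⊔ (y ⊓ z) := by
  induction x using WithBot.recBotCoe with
  | bot => simp
  | coe x =>
    induction y using WithBot.recBotCoe with
    | bot => simpa using inf_eq_left.2 h
    | coe y =>
      induction z using WithBot.recBotCoe with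
      | bot => simp at h
      | coe z =>
        rw [← WithBot.coe_sup, ← WithBot.coe_inf, ← WithBot.coe_inf, ← WithBot.coe_sup,
          WithBot.coe_eq_coe]
        exact sup_inf_assoc_of_le y (WithBot.coe_le_coe.1 h)

private lemma coversW {p : α} {S : Finset α} :
    Covers p S ↔ (↑p : WithBot α) ≤ S.sup ((↑) : α → WithBot α) := by
  constructor
  · rintro ⟨h, hle⟩
    have : ((S.sup' h id : α) : WithBot α) = S.sup ((↑) : α → WithBot α) :=
      Finset.coe_sup' h id
    exact this ▸ WithBot.coe_le_coe.2 hle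
  · intro h
    rcases S.eq_empty_or_nonempty with rfl | hne
    · simp at h
    · refine ⟨hne, ?_⟩
      have heq : ((S.sup' hne id : α) : WithBot α) = S.sup ((↑) : α → WithBot α) :=
        Finset.coe_sup' hne id
      exact WithBot.coe_le_coe.1 (heq ▸ h)

private lemma mem_of_sup_coe_eq {z : α}
    (hz : ∀ u v : α, u ⊔ v = z → u = z ∨ v = z) {S : Finset α}
    (heq : S.sup ((↑) : α → WithBot α) = (↑z : WithBot α)) : z ∈ S := by
  classical
  induction S using Finset.induction_on with
  | empty => simp at heq
  | @insert x S hx ih =>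
    rw [Finset.sup_insert] at heq
    rcases eq_or_ne (S.sup ((↑) : α → WithBot α)) ⊥ with hb | hb
    · rw [hb, sup_bot_eq, WithBot.coe_eq_coe] at heq
      exact Finset.mem_insert.2 (Or.inl heq.symm)
    · obtain ⟨v, hv⟩ := WithBot.ne_bot_iff_exists.1 hb
      rw [← hv, ← WithBot.coe_sup, WithBot.coe_eq_coe] at heq
      rcases hz _ _ heq with h | h
      · exact Finset.mem_insert.2 (Or.inl h.symm)
      · exact Finset.mem_insert.2 (Or.inr (ih (by rw [← hv, h])))

end Aux

/-- Lemma on minimal covers in modular lattices: if `p ≤ p̄ ⊔ a` is a tight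
join-cover, `Q` is a minimal join-cover of `a` with `p̄ ∉ Q`, and `{p̄} ∪ Q` covers
`p` irredundantly, then `{p̄} ∪ Q` is a minimal join-cover of `p`. -/
theorem stmt13 {α : Type*} [Lattice α] [IsModularLattice α] [DecidableEq α]
    (p pbar a : α) (hp : SupIrred p) (hpbar : SupIrred pbar)
    (Q : Finset α) (hQ : MinCovers a Q) (hpbarQ : pbar ∉ Q)
    (hcov : p ≤ pbar ⊔ a)
    (htight₁ : ∀ x, x < pbar → ¬ p ≤ x ⊔ a)
    (htight₂ : ∀ y, y < a → ¬ p ≤ pbar ⊔ y)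
    (hirr : IrredCovers p (insert pbar Q)) :
    MinCovers p (insert pbar Q) := by
  classical
  obtain ⟨hcovE, hirr2⟩ := hirr
  refine ⟨hcovE, ?_⟩
  intro X hX hRef
  -- coe notation
  have hcovW : (↑p : WithBot α) ≤ ↑pbar ⊔ ↑a := by
    rw [← WithBot.coe_sup]; exact WithBot.coe_le_coe.2 hcov
  -- lifted tightness
  have T1 : ∀ W : WithBot α, (↑p : WithBot α) ≤ W ⊔ ↑a → (↑pbar : WithBot α) ≤ W ⊔ ↑a := by
    intro W hPW
    have hne : W ⊔ (↑a : WithBot α) ≠ ⊥ := fun h => by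
      simp [h, le_bot_iff] at hPW
    obtain ⟨v, hv⟩ := WithBot.ne_bot_iff_exists.1 hne
    have hmod : (↑a ⊔ (↑pbar : WithBot α)) ⊓ (↑a ⊔ W) = ↑a ⊔ ((↑pbar : WithBot α) ⊓ (↑a ⊔ W)) :=
      modW le_sup_left
    have hple : (↑p : WithBot α) ≤ ↑(pbar ⊓ v) ⊔ ↑a := by
      rw [WithBot.coe_inf, hv, sup_comm W, sup_comm _ (↑a : WithBot α), ← hmod]
      exact le_inf (hcovW.trans (le_of_eq (sup_comm _ _))) (hPW.trans (le_of_eq (sup_comm _ _)))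
    have hple' : p ≤ (pbar ⊓ v) ⊔ a := by
      rw [← WithBot.coe_sup] at hple; exact WithBot.coe_le_coe.1 hple
    have heq : pbar ⊓ v = pbar := by
      rcases (inf_le_left : pbar ⊓ v ≤ pbar).lt_or_eq with hlt | h
      · exact absurd hple' (htight₁ _ hlt)
      · exact h
    have : pbar ≤ v := inf_eq_left.1 heq
    calc (↑pbar : WithBot α) ≤ ↑v := WithBot.coe_le_coe.2 this
      _ = W ⊔ ↑a := hv
  have T2 : ∀ W : WithBot α, (↑p : WithBot α) ≤ ↑pbar ⊔ W → (↑a : WithBot α) ≤ ↑pbar ⊔ W := by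
    intro W hPW
    have hne : (↑pbar : WithBot α) ⊔ W ≠ ⊥ := fun h => by
      simp [h, le_bot_iff] at hPW
    obtain ⟨v, hv⟩ := WithBot.ne_bot_iff_exists.1 hne
    have hmod : ((↑pbar : WithBot α) ⊔ ↑a) ⊓ (↑pbar ⊔ W) = ↑pbar ⊔ ((↑a : WithBot α) ⊓ (↑pbar ⊔ W)) :=
      modW le_sup_left
    have hple : (↑p : WithBot α) ≤ ↑pbar ⊔ ↑(a ⊓ v) := by
      rw [WithBot.coe_inf, hv, ← hmod]
      exact le_inf hcovW hPW
    have hple' : p ≤ pbar ⊔ (a ⊓ v) := by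
      rw [← WithBot.coe_sup] at hple; exact WithBot.coe_le_coe.1 hple
    have heq : a ⊓ v = a := by
      rcases (inf_le_left : a ⊓ v ≤ a).lt_or_eq with hlt | h
      · exact absurd hple' (htight₂ _ hlt)
      · exact h
    have : a ≤ v := inf_eq_left.1 heq
    calc (↑a : WithBot α) ≤ ↑v := WithBot.coe_le_coe.2 this
      _ = ↑pbar ⊔ W := hv
  -- splitting X
  set X₁ : Finset α := X.filter (fun x => x ≤ pbar) with hX₁
  set X₂ : Finset α := X.filter (fun x => ¬ x ≤ pbar) with hX₂
  set B : WithBot α := X₁.sup ((↑) : α → WithBot α) with hB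
  set C : WithBot α := X₂.sup ((↑) : α → WithBot α) with hC
  have hX₂mem : ∀ x ∈ X₂, ∃ q ∈ Q, x ≤ q := by
    intro x hx
    have hxX : x ∈ X := Finset.mem_of_mem_filter _ hx
    have hnp : ¬ x ≤ pbar := (Finset.mem_filter.1 hx).2
    obtain ⟨e, he, hxe⟩ := hRef x hxX
    rcases Finset.mem_insert.1 he with rfl | heQ
    · exact absurd hxe hnp
    · exact ⟨e, heQ, hxe⟩
  have hBle : B ≤ (↑pbar : WithBot α) :=
    Finset.sup_le fun x hx => WithBot.coe_le_coe.2 (Finset.mem_filter.1 hx).2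
  have hPBC : (↑p : WithBot α) ≤ B ⊔ C := by
    have hXsplit : X₁ ∪ X₂ = X := Finset.filter_union_filter_not_eq _ X
    have : X.sup ((↑) : α → WithBot α) = B ⊔ C := by
      rw [hB, hC, ← Finset.sup_union, hXsplit]
    rw [← this]
    exact coversW.1 hX
  have hASQ : (↑a : WithBot α) ≤ Q.sup ((↑) : α → WithBot α) := coversW.1 hQ.1
  have hCSQ : C ≤ Q.sup ((↑) : α → WithBot α) := Finset.sup_le fun x hx => by
    obtain ⟨q, hq, hxq⟩ := hX₂mem x hx
    exact (WithBot.coe_le_coe.2 hxq).trans (Finset.le_sup hq)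
  have hnPSQ : ¬ (↑p : WithBot α) ≤ Q.sup ((↑) : α → WithBot α) := by
    intro h
    exact hirr2 pbar (Finset.mem_insert_self _ _)
      (by rw [Finset.erase_insert hpbarQ]; exact coversW.2 h)
  -- Part 1 : pbar ∈ X
  have hpbarX : pbar ∈ X := by
    have h1 : (↑pbar : WithBot α) ≤ B ⊔ (C ⊔ ↑a) := by
      have := T1 (B ⊔ C) (hPBC.trans le_sup_left)
      rwa [sup_assoc] at this
    have hD : (↑pbar : WithBot α) = B ⊔ ((C ⊔ ↑a) ⊓ ↑pbar) := by
      have hmod : (B ⊔ (C ⊔ ↑a)) ⊓ (↑pbar : WithBot α) = B ⊔ ((C ⊔ ↑a) ⊓ ↑pbar) := modW hBle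
      rw [← hmod, inf_eq_right.2 h1]
    have hDne : (C ⊔ (↑a : WithBot α)) ⊓ ↑pbar ≠ ⊥ := by
      intro h
      have : (↑(a ⊓ pbar) : WithBot α) ≤ ⊥ := by
        rw [← h, WithBot.coe_inf]
        exact inf_le_inf le_sup_right le_rfl
      exact WithBot.coe_ne_bot (le_bot_iff.1 this)
    obtain ⟨d, hd⟩ := WithBot.ne_bot_iff_exists.1 hDne
    have hright : (↑pbar : WithBot α) ≤ C ⊔ ↑a → False := by
      intro h
      apply hnPSQ
      calc (↑p : WithBot α) ≤ ↑pbar ⊔ ↑a := hcovW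
        _ ≤ (C ⊔ ↑a) ⊔ ↑a := sup_le_sup_right h _
        _ = C ⊔ ↑a := by rw [sup_assoc, sup_idem]
        _ ≤ Q.sup ((↑) : α → WithBot α) := sup_le hCSQ hASQ
    rcases eq_or_ne B ⊥ with hBb | hBb
    · exfalso
      apply hright
      rw [hBb, bot_sup_eq] at hD
      rw [hD]
      exact inf_le_left
    · obtain ⟨b, hb⟩ := WithBot.ne_bot_iff_exists.1 hBb
      have : (↑pbar : WithBot α) = ↑(b ⊔ d) := by
        rw [WithBot.coe_sup, hb, hd, ← hD]
      have hbd : b ⊔ d = pbar := (WithBot.coe_eq_coe.1 this).symm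
      rcases hpbar.2 hbd with hbp | hdp
    -- b = pbar : pbar is the sup of X₁, extract membership
      · have hBeq : X₁.sup ((↑) : α → WithBot α) = (↑pbar : WithBot α) := by rw [← hB, ← hb, hbp]
        have : pbar ∈ X₁ :=
          mem_of_sup_coe_eq (fun u v huv => hpbar.2 huv) hBeq
        exact Finset.mem_of_mem_filter _ this
      · exfalso
        apply hright
        calc (↑pbar : WithBot α) = ↑d := by rw [← hdp]
          _ = (C ⊔ ↑a) ⊓ ↑pbar := hd
          _ ≤ C ⊔ ↑a := inf_le_left
  -- Part 2 : Q ⊆ X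
  have hQX : ∀ q ∈ Q, q ∈ X := by
    intro q hq
    set R : WithBot α := (Q.erase q).sup ((↑) : α → WithBot α) with hR
    have hqpbar : q ≠ pbar := fun h => hpbarQ (h ▸ hq)
    have hSQ : Q.sup ((↑) : α → WithBot α) = ↑q ⊔ R := by
      conv_lhs => rw [← Finset.insert_erase hq]
      rw [Finset.sup_insert, hR]
    -- the contradiction used in two branches
    have hfalse : (↑q : WithBot α) ≤ ↑pbar ⊔ R → False := by
      intro h
      apply hirr2 q (Finset.mem_insert_of_mem hq)
      rw [Finset.erase_insert_of_ne hqpbar.symm]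
      apply coversW.2
      rw [Finset.sup_insert]
      calc (↑p : WithBot α) ≤ ↑pbar ⊔ ↑a := hcovW
        _ ≤ ↑pbar ⊔ Q.sup ((↑) : α → WithBot α) := sup_le_sup_left hASQ _
        _ = ↑pbar ⊔ (↑q ⊔ R) := by rw [hSQ]
        _ ≤ ↑pbar ⊔ ((↑pbar ⊔ R) ⊔ R) := sup_le_sup_left (sup_le_sup_right h _) _
        _ = ↑pbar ⊔ R := by rw [sup_assoc, sup_idem, ← sup_assoc, sup_idem]
    -- pairwise sup-irreducibility of q, from minimality of Q
    have hqirr : ∀ u v : α, u ⊔ v = q → u = q ∨ v = q := by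
      intro u v huv
      by_contra hcon
      push_neg at hcon
      have hYcov : Covers a (insert u (insert v (Q.erase q))) := by
        apply coversW.2
        rw [Finset.sup_insert, Finset.sup_insert, ← sup_assoc, ← WithBot.coe_sup, huv]
        rw [hSQ] at hASQ
        exact hASQ
      have hYref : Refines (insert u (insert v (Q.erase q))) Q := by
        intro x hx
        rcases Finset.mem_insert.1 hx with rfl | hx
        · exact ⟨q, hq, le_sup_left.trans_eq huv⟩
        rcases Finset.mem_insert.1 hx with rfl | hx
        · exact ⟨q, hq, le_sup_right.trans_eq huv⟩
        · exact ⟨x, Finset.mem_of_mem_erase hx, le_rfl⟩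
      have := hQ.2 _ hYcov hYref hq
      rcases Finset.mem_insert.1 this with h | h
      · exact hcon.1 h.symm
      rcases Finset.mem_insert.1 h with h | h
      · exact hcon.2 h.symm
      · exact Finset.notMem_erase _ _ h
    -- split C at q
    set X₂q : Finset α := X₂.filter (fun x => x ≤ q) with hX₂q
    set c₁ : WithBot α := X₂q.sup ((↑) : α → WithBot α) with hc₁def
    have hc₁q : c₁ ≤ (↑q : WithBot α) :=
      Finset.sup_le fun x hx => WithBot.coe_le_coe.2 (Finset.mem_filter.1 hx).2
    have hCsplit : C ≤ c₁ ⊔ R := by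
      apply Finset.sup_le
      intro x hx
      by_cases hxq : x ≤ q
      · exact le_sup_of_le_left (Finset.le_sup (Finset.mem_filter.2 ⟨hx, hxq⟩))
      · obtain ⟨q', hq', hxq'⟩ := hX₂mem x hx
        have hq'ne : q' ≠ q := fun h => hxq (h ▸ hxq')
        exact le_sup_of_le_right
          ((WithBot.coe_le_coe.2 hxq').trans (Finset.le_sup (Finset.mem_erase.2 ⟨hq'ne, hq'⟩)))
    -- a ≤ pbar ⊔ C, hence a ≤ c₁ ⊔ (pbar ⊔ R)
    have hA2 : (↑a : WithBot α) ≤ ↑pbar ⊔ C :=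
      T2 C (hPBC.trans (sup_le_sup_right hBle C))
    set W0 : WithBot α := c₁ ⊔ ((↑pbar : WithBot α) ⊔ R) with hW0
    have hAW : (↑a : WithBot α) ≤ W0 := by
      calc (↑a : WithBot α) ≤ ↑pbar ⊔ C := hA2
        _ ≤ ↑pbar ⊔ (c₁ ⊔ R) := sup_le_sup_left hCsplit _
        _ = W0 := by rw [hW0, sup_left_comm]
    have hW0ne : W0 ≠ ⊥ := by
      intro h
      have : (↑pbar : WithBot α) ≤ ⊥ := by
        rw [← h, hW0]; exact le_sup_of_le_right le_sup_left
      simp at this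
    obtain ⟨w, hw⟩ := WithBot.ne_bot_iff_exists.1 hW0ne
    have hRW0 : R ≤ W0 := le_sup_of_le_right le_sup_right
    have hARS : (↑a : WithBot α) ≤ ↑(q ⊓ w) ⊔ R := by
      have hmod : (R ⊔ (↑q : WithBot α)) ⊓ W0 = R ⊔ ((↑q : WithBot α) ⊓ W0) := modW hRW0
      have h1 : (↑a : WithBot α) ≤ (R ⊔ ↑q) ⊓ W0 := by
        refine le_inf ?_ hAW
        rw [sup_comm]
        exact hSQ ▸ hASQ
      rw [WithBot.coe_inf, hw, sup_comm]
      exact h1.trans_eq hmod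
    -- apply minimality of Q
    have hYcov : Covers a (insert (q ⊓ w) (Q.erase q)) := by
      apply coversW.2
      rw [Finset.sup_insert]
      exact hARS
    have hYref : Refines (insert (q ⊓ w) (Q.erase q)) Q := by
      intro x hx
      rcases Finset.mem_insert.1 hx with rfl | hx
      · exact ⟨q, hq, inf_le_left⟩
      · exact ⟨x, Finset.mem_of_mem_erase hx, le_rfl⟩
    have hqY := hQ.2 _ hYcov hYref hq
    have hqw : q ≤ w := by
      rcases Finset.mem_insert.1 hqY with h | h
      · conv_lhs => rw [h]
        exact inf_le_right
      · exact absurd h (Finset.notMem_erase _ _)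
    have hqW0 : (↑q : WithBot α) ≤ W0 := by
      rw [← hw]; exact WithBot.coe_le_coe.2 hqw
    -- modular split of q
    have hqeq : (↑q : WithBot α) = c₁ ⊔ (((↑pbar : WithBot α) ⊔ R) ⊓ ↑q) := by
      have hmod : (c₁ ⊔ ((↑pbar : WithBot α) ⊔ R)) ⊓ ↑q = c₁ ⊔ (((↑pbar : WithBot α) ⊔ R) ⊓ ↑q) :=
        modW hc₁q
      rw [← hmod, ← hW0, inf_eq_right.2 hqW0]
    have hTne : ((↑pbar : WithBot α) ⊔ R) ⊓ ↑q ≠ ⊥ := by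
      intro h
      have : (↑(pbar ⊓ q) : WithBot α) ≤ ⊥ := by
        rw [← h, WithBot.coe_inf]
        exact inf_le_inf le_sup_left le_rfl
      exact WithBot.coe_ne_bot (le_bot_iff.1 this)
    obtain ⟨t, ht⟩ := WithBot.ne_bot_iff_exists.1 hTne
    have htPR : (↑t : WithBot α) ≤ ↑pbar ⊔ R := ht.trans_le inf_le_left
    rcases eq_or_ne c₁ ⊥ with hc₁b | hc₁b
    · exfalso
      apply hfalse
      rw [hqeq, hc₁b, bot_sup_eq, ← ht]
      exact htPR
    · obtain ⟨c₁', hc₁'⟩ := WithBot.ne_bot_iff_exists.1 hc₁b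
      have : (↑q : WithBot α) = ↑(c₁' ⊔ t) := by
        rw [WithBot.coe_sup, hc₁', ht, ← hqeq]
      have hct : c₁' ⊔ t = q := (WithBot.coe_eq_coe.1 this).symm
      rcases hqirr _ _ hct with h | h
      · -- c₁ = q : extract q ∈ X₂q
        have hc₁eq : X₂q.sup ((↑) : α → WithBot α) = (↑q : WithBot α) := by rw [← hc₁def, ← hc₁', h]
        have : q ∈ X₂q := mem_of_sup_coe_eq hqirr hc₁eq
        exact Finset.mem_of_mem_filter _ (Finset.mem_of_mem_filter _ this)
      · exfalso
        apply hfalse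
        calc (↑q : WithBot α) = ↑t := by rw [← h]
          _ ≤ ↑pbar ⊔ R := htPR
  -- conclude
  intro e he
  rcases Finset.mem_insert.1 he with rfl | heQ
  · exact hpbarX
  · exact hQX e heQ
end

section
/- Every modular spatial lattice is strongly spatial: if p is a completely join-irreducible element of a modular spatial lattice L and X is a finite join-cover of p, then X can be refined to a minimal join-cover of p consisting of completely join-irreducible elements. -/
/-- `p` is completely join-irreducible (a point): the set of elements strictly
below `p` has a largest element. -/
def CJI {α : Type*} [Lattice α] (p : α) : Prop :=
  ∃ q, q < p ∧ ∀ x, x < p → x ≤ q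

/-- A lattice is spatial if every element is the (possibly infinite) join of the
points below it. -/
def Spatial (α : Type*) [Lattice α] : Prop :=
  ∀ a : α, IsLUB {p | CJI p ∧ p ≤ a} a

section Aux

variable {α : Type*}

/-- Covers is preserved by refinement upwards. -/
lemma aux_refines_covers [SemilatticeSup α] {p : α} {Z E : Finset α}
    (hZ : Covers p Z) (hr : Refines Z E) (hE : E.Nonempty) : Covers p E := by
  obtain ⟨hz, hpz⟩ := hZ
  refine ⟨hE, hpz.trans (Finset.sup'_le _ _ fun z hzZ => ?_)⟩
  obtain ⟨e, heE, hle⟩ := hr z hzZ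
  exact hle.trans (Finset.le_sup' id heE)

lemma aux_refines_of_subset [SemilatticeSup α] {X E : Finset α} (h : X ⊆ E) : Refines X E :=
  fun x hx => ⟨x, h hx, le_rfl⟩

lemma aux_refines_trans [SemilatticeSup α] {X Y Z : Finset α}
    (h1 : Refines X Y) (h2 : Refines Y Z) : Refines X Z := by
  intro x hx
  obtain ⟨y, hy, hxy⟩ := h1 x hx
  obtain ⟨z, hz, hyz⟩ := h2 y hy
  exact ⟨z, hz, hxy.trans hyz⟩

/-- `{p}` is a minimal cover of `p` when `p` is a point. -/
lemma aux_minCovers_self [Lattice α] {p : α} (hp : CJI p) : MinCovers p {p} := by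
  classical
  obtain ⟨p', hlt, hmax⟩ := hp
  refine ⟨⟨⟨p, Finset.mem_singleton_self p⟩, by simp⟩, ?_⟩
  rintro Z ⟨hne, hcov⟩ hr y hy
  rw [Finset.mem_singleton] at hy; subst hy
  by_contra hpZ
  have hle : Z.sup' hne id ≤ p' := by
    refine Finset.sup'_le _ _ fun z hz => ?_
    obtain ⟨e, he, hzle⟩ := hr z hz
    rw [Finset.mem_singleton] at he; subst he
    refine hmax z (lt_of_le_of_ne hzle ?_)
    rintro rfl; exact hpZ hz
  exact hlt.not_ge (hcov.trans hle)

/-- `a` is a good member of the cover `E` of `p`: a point that cannot be lowered. -/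
def Good [Lattice α] [DecidableEq α] (p a : α) (E : Finset α) : Prop :=
  CJI a ∧ ∀ x, x < a → ¬ Covers p (insert x (E.erase a))

open Classical in
noncomputable def badSet [Lattice α] [DecidableEq α] (p : α) (E : Finset α) : Finset α :=
  @Finset.filter _ (fun a => ¬ Good p a E) (Classical.decPred _) E

lemma mem_badSet [Lattice α] [DecidableEq α] {p : α} {E : Finset α} {a : α} :
    a ∈ badSet p E ↔ a ∈ E ∧ ¬ Good p a E := by
  simp [badSet, Finset.mem_filter]

/-- If every member of a cover is good, the cover is minimal. -/
lemma aux_minCovers_of_all_good [Lattice α] [DecidableEq α] {p : α} {E : Finset α}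
    (hE : Covers p E) (hg : ∀ a ∈ E, Good p a E) : MinCovers p E := by
  classical
  refine ⟨hE, fun Z hZ hr a haE => ?_⟩
  by_contra haZ
  obtain ⟨⟨a', ha'lt, ha'max⟩, htight⟩ := hg a haE
  apply htight a' ha'lt
  refine aux_refines_covers hZ ?_ (Finset.insert_nonempty _ _)
  intro z hz
  obtain ⟨e, he, hle⟩ := hr z hz
  by_cases hea : e = a
  · subst hea
    refine ⟨a', Finset.mem_insert_self _ _, ha'max z (lt_of_le_of_ne hle ?_)⟩
    rintro rfl; exact haZ hz
  · exact ⟨e, Finset.mem_insert_of_mem (Finset.mem_erase.2 ⟨hea, he⟩), hle⟩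

/-- Goodness transfers along pointwise lowering of the rest of the cover. -/
lemma aux_good_of_refines [Lattice α] [DecidableEq α] {p e : α} {E E' : Finset α}
    (hg : Good p e E) (hr : Refines (E'.erase e) (E.erase e)) : Good p e E' := by
  classical
  refine ⟨hg.1, fun x hx hc => hg.2 x hx ?_⟩
  refine aux_refines_covers hc ?_ (Finset.insert_nonempty _ _)
  intro z hz
  rcases Finset.mem_insert.1 hz with rfl | hz'
  · exact ⟨z, Finset.mem_insert_self _ _, le_rfl⟩
  · obtain ⟨w, hw, hzw⟩ := hr z hz'
    exact ⟨w, Finset.mem_insert_of_mem hw, hzw⟩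

/-- Key lemma: in a modular spatial lattice, if `p ≤ a ⊔ b` and `p ≰ b`, there is a
point `q ≤ a` with `q ⊔ b = p ⊔ b`. -/
lemma aux_point_replace [Lattice α] [IsModularLattice α] (hsp : Spatial α)
    {p a b : α} (hp : CJI p) (hab : p ≤ a ⊔ b) (hnb : ¬ p ≤ b) :
    ∃ q, CJI q ∧ q ≤ a ∧ q ⊔ b = p ⊔ b := by
  obtain ⟨p', hp'lt, hp'max⟩ := hp
  set a' := a ⊓ (p ⊔ b) with ha'
  have hab' : a' ⊔ b = p ⊔ b := by
    rw [ha', inf_comm a (p ⊔ b), inf_sup_assoc_of_le _ le_sup_right]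
    exact inf_eq_left.2 (sup_le hab le_sup_right)
  have hpp'b : ¬ p ≤ p' ⊔ b := by
    intro h
    have h1 : (p' ⊔ b) ⊓ p = p' ⊔ b ⊓ p := sup_inf_assoc_of_le _ hp'lt.le
    have h2 : (p' ⊔ b) ⊓ p = p := inf_eq_right.2 h
    have h3 : b ⊓ p ≤ p' := by
      refine hp'max _ (lt_of_le_of_ne inf_le_right ?_)
      intro he
      exact hnb (he ▸ inf_le_left)
    have : p ≤ p' := by
      rw [← h2, h1]
      exact sup_le le_rfl h3
    exact hp'lt.not_ge this
  have hanots : ¬ a' ≤ (p' ⊔ b) ⊓ a' := by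
    intro h
    have ha'le : a' ≤ p' ⊔ b := h.trans inf_le_left
    have : p ⊔ b ≤ p' ⊔ b := by
      rw [← hab']
      exact sup_le ha'le le_sup_right
    exact hpp'b (le_sup_left.trans this)
  obtain ⟨q, ⟨hqCJI, hqa'⟩, hqs⟩ : ∃ q, (CJI q ∧ q ≤ a') ∧ ¬ q ≤ (p' ⊔ b) ⊓ a' := by
    by_contra hcon
    push_neg at hcon
    exact hanots ((hsp a').2 (fun q hq => hcon q ⟨hq.1, hq.2⟩))
  have hqnotpb : ¬ q ≤ p' ⊔ b := fun h => hqs (le_inf h hqa')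
  have hpqb : p ≤ q ⊔ b := by
    by_contra hnot
    have hy : q ⊔ b ≤ p ⊔ b := sup_le (hqa'.trans (inf_le_right.trans le_rfl)) le_sup_right
    have h1 : (b ⊔ p) ⊓ (q ⊔ b) = b ⊔ p ⊓ (q ⊔ b) := sup_inf_assoc_of_le _ le_sup_right
    have h2 : (b ⊔ p) ⊓ (q ⊔ b) = q ⊔ b := by
      rw [sup_comm b p]
      exact inf_eq_right.2 hy
    have h3 : p ⊓ (q ⊔ b) ≤ p' := by
      refine hp'max _ (lt_of_le_of_ne inf_le_left ?_)
      intro he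
      exact hnot (he ▸ inf_le_right)
    have : q ⊔ b ≤ p' ⊔ b := by
      rw [← h2, h1, sup_comm b (p ⊓ (q ⊔ b))]
      exact sup_le (h3.trans le_sup_left) le_sup_right
    exact hqnotpb (le_sup_left.trans this)
  refine ⟨q, hqCJI, hqa'.trans inf_le_left, le_antisymm ?_ (sup_le hpqb le_sup_right)⟩
  exact sup_le (hqa'.trans inf_le_right) le_sup_right

/-- Tightness: if `q` is a point with `q ⊔ b = p ⊔ b` and `p ≰ b`, then no `x < q`
satisfies `p ≤ x ⊔ b`. -/
lemma aux_tight [Lattice α] [IsModularLattice α] {p q b : α}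
    (hq : CJI q) (hqb : q ⊔ b = p ⊔ b) (hnb : ¬ p ≤ b) :
    ∀ x, x < q → ¬ p ≤ x ⊔ b := by
  obtain ⟨q', hq'lt, hq'max⟩ := hq
  intro x hx hpxb
  have hqnb : ¬ q ≤ b := by
    intro h
    have : q ⊔ b = b := sup_eq_right.2 h
    rw [this] at hqb
    exact hnb (le_sup_left.trans hqb.ge)
  have hxb : x ⊔ b = q ⊔ b := by
    refine le_antisymm (sup_le (hx.le.trans le_sup_left) le_sup_right) ?_
    rw [hqb]
    exact sup_le hpxb le_sup_right
  have hqle : q ≤ x ⊔ b := hxb ▸ le_sup_left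
  have h1 : (x ⊔ b) ⊓ q = x ⊔ b ⊓ q := sup_inf_assoc_of_le _ hx.le
  have h2 : (x ⊔ b) ⊓ q = q := inf_eq_right.2 hqle
  have h3 : b ⊓ q ≤ q' := by
    refine hq'max _ (lt_of_le_of_ne inf_le_right ?_)
    intro he
    exact hqnb (he ▸ inf_le_left)
  have : q ≤ q' := by
    rw [← h2, h1]
    exact sup_le (hq'max x hx) h3
  exact hq'lt.not_ge this

end Aux

lemma aux_build {α : Type*} [Lattice α] [IsModularLattice α] [DecidableEq α] (hsp : Spatial α)
    {p : α} (hp : CJI p) :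
    ∀ n (E : Finset α), Covers p E → (badSet p E).card ≤ n →
      ∃ Y, MinCovers p Y ∧ Refines Y E ∧ ∀ q ∈ Y, CJI q := by
  intro n
  induction n with
  | zero =>
    intro E hE hcard
    have hall : ∀ a ∈ E, Good p a E := by
      intro a ha
      by_contra hbad
      have h1 : a ∈ badSet p E := mem_badSet.2 ⟨ha, hbad⟩
      have h2 := Finset.card_pos.2 ⟨a, h1⟩
      omega
    exact ⟨E, aux_minCovers_of_all_good hE hall, aux_refines_of_subset (subset_refl E),
      fun q hq => (hall q hq).1⟩
  | succ n ih =>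
    intro E hE hcard
    by_cases hall : ∀ a ∈ E, Good p a E
    · exact ⟨E, aux_minCovers_of_all_good hE hall, aux_refines_of_subset (subset_refl E),
        fun q hq => (hall q hq).1⟩
    push_neg at hall
    obtain ⟨a, haE, hbad⟩ := hall
    have habad : a ∈ badSet p E := mem_badSet.2 ⟨haE, hbad⟩
    by_cases hne : (E.erase a).Nonempty
    · set b := (E.erase a).sup' hne id with hb
      by_cases hpb : p ≤ b
      · -- drop a
        have hcov' : Covers p (E.erase a) := ⟨hne, hpb⟩
        have hsub : badSet p (E.erase a) ⊆ (badSet p E).erase a := by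
          intro e he
          obtain ⟨heE, hebad⟩ := mem_badSet.1 he
          refine Finset.mem_erase.2 ⟨(Finset.mem_erase.1 heE).1,
            mem_badSet.2 ⟨Finset.mem_of_mem_erase heE, fun hg => hebad ?_⟩⟩
          exact aux_good_of_refines hg
            (aux_refines_of_subset (Finset.erase_subset_erase e (Finset.erase_subset a E)))
        have hcard' : (badSet p (E.erase a)).card ≤ n := by
          have h1 := Finset.card_le_card hsub
          rw [Finset.card_erase_of_mem habad] at h1
          omega
        obtain ⟨Y, hY1, hY2, hY3⟩ := ih (E.erase a) hcov' hcard'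
        exact ⟨Y, hY1, aux_refines_trans hY2 (aux_refines_of_subset (Finset.erase_subset a E)),
          hY3⟩
      · -- replace a by a point q
        have hab : p ≤ a ⊔ b := by
          obtain ⟨hEne, hcov⟩ := hE
          refine hcov.trans (Finset.sup'_le _ _ fun z hz => ?_)
          by_cases hz' : z = a
          · subst hz'; exact le_sup_left
          · exact (Finset.le_sup' id (Finset.mem_erase.2 ⟨hz', hz⟩)).trans le_sup_right
        obtain ⟨q, hqCJI, hqa, hqb⟩ := aux_point_replace hsp hp hab hpb
        set E' := insert q (E.erase a) with hE'def
        have hE'ne : E'.Nonempty := Finset.insert_nonempty _ _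
        have hcovE' : Covers p E' := by
          refine ⟨hE'ne, ?_⟩
          have hq' : q ≤ E'.sup' hE'ne id := Finset.le_sup' id (Finset.mem_insert_self _ _)
          have hb' : b ≤ E'.sup' hE'ne id := Finset.sup'_le _ _ fun z hz =>
            Finset.le_sup' id (Finset.mem_insert_of_mem hz)
          have hpq : p ≤ q ⊔ b := le_sup_left.trans hqb.ge
          exact hpq.trans (sup_le hq' hb')
        have hqgood : Good p q E' := by
          refine ⟨hqCJI, fun x hx hc => ?_⟩
          have hpxb : p ≤ x ⊔ b := by
            obtain ⟨hcne, hcle⟩ := hc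
            refine hcle.trans (Finset.sup'_le _ _ fun z hz => ?_)
            rcases Finset.mem_insert.1 hz with rfl | hz'
            · exact le_sup_left
            · have hz1 : z ∈ E' := Finset.mem_of_mem_erase hz'
              have hz2 : z ≠ q := (Finset.mem_erase.1 hz').1
              have hz3 : z ∈ E.erase a := by
                rcases Finset.mem_insert.1 hz1 with rfl | h
                · exact absurd rfl hz2
                · exact h
              exact (Finset.le_sup' id hz3).trans le_sup_right
          exact aux_tight hqCJI hqb hpb x hx hpxb
        have hold : ∀ e ∈ E.erase a, Good p e E → Good p e E' := by
          intro e he hg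
          refine aux_good_of_refines hg ?_
          intro z hz
          have hz1 : z ∈ E' := Finset.mem_of_mem_erase hz
          have hz2 : z ≠ e := (Finset.mem_erase.1 hz).1
          rcases Finset.mem_insert.1 hz1 with rfl | h
          · refine ⟨a, Finset.mem_erase.2 ⟨fun hae => ?_, haE⟩, hqa⟩
            exact (Finset.mem_erase.1 he).1 hae.symm
          · exact ⟨z, Finset.mem_erase.2 ⟨hz2, Finset.mem_of_mem_erase h⟩, le_rfl⟩
        have hsub : badSet p E' ⊆ (badSet p E).erase a := by
          intro e he
          obtain ⟨heE', hebad⟩ := mem_badSet.1 he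
          rcases Finset.mem_insert.1 heE' with rfl | heEa
          · exact absurd hqgood hebad
          · exact Finset.mem_erase.2 ⟨(Finset.mem_erase.1 heEa).1,
              mem_badSet.2 ⟨Finset.mem_of_mem_erase heEa, fun hg => hebad (hold e heEa hg)⟩⟩
        have hcard' : (badSet p E').card ≤ n := by
          have h1 := Finset.card_le_card hsub
          rw [Finset.card_erase_of_mem habad] at h1
          omega
        obtain ⟨Y, hY1, hY2, hY3⟩ := ih E' hcovE' hcard'
        refine ⟨Y, hY1, aux_refines_trans hY2 ?_, hY3⟩
        intro z hz
        rcases Finset.mem_insert.1 hz with rfl | h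
        · exact ⟨a, haE, hqa⟩
        · exact ⟨z, Finset.mem_of_mem_erase h, le_rfl⟩
    · -- E = {a}, so p ≤ a
      have hpa : p ≤ a := by
        obtain ⟨hEne, hcov⟩ := hE
        refine hcov.trans (Finset.sup'_le _ _ fun z hz => ?_)
        by_cases hz' : z = a
        · subst hz'; exact le_rfl
        · exact absurd ⟨z, Finset.mem_erase.2 ⟨hz', hz⟩⟩ hne
      refine ⟨{p}, aux_minCovers_self hp, fun x hx => ⟨a, haE, ?_⟩, fun q hq => ?_⟩
      · rw [Finset.mem_singleton] at hx; subst hx; exact hpa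
      · rw [Finset.mem_singleton] at hq; subst hq; exact hp

/-- Every modular spatial lattice is strongly spatial: every finite join-cover of a
point `p` refines to a minimal join-cover of `p` consisting of points. -/
theorem stmt15 {α : Type*} [Lattice α] [IsModularLattice α] (hsp : Spatial α)
    (p : α) (hp : CJI p) (X : Finset α) (hX : Covers p X) :
    ∃ Y : Finset α, MinCovers p Y ∧ Refines Y X ∧ ∀ q ∈ Y, CJI q := by
  classical
  exact aux_build hsp hp (badSet p X).card X hX le_rfl
end
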